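/- Let ρ be a Borel probability measure on continuous functions f: ℝ → ℂ that is invariant under integer translations, and suppose the law of f(0) under ρ is absolutely continuous with respect to Lebesgue measure. Then ρ-almost surely, f does not belong to L²(ℝ). -/

import Mathlib

open MeasureTheory Filter Set Topology

noncomputable instance : MeasurableSpace C(ℝ, ℂ) := borel _
instance : BorelSpace C(ℝ, ℂ) := ⟨rfl⟩

noncomputable def muI : Measure (Icc (-1:ℝ) 1) := Measure.comap Subtype.val volume

instance : IsFiniteMeasure muI := by
  constructor
  rw [muI, MeasurableEmbedding.comap_apply (MeasurableEmbedding.subtype_coe measurableSet_Icc),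
    Set.image_univ, Subtype.range_coe]
  simp [Real.volume_Icc]

theorem contG0 : Continuous fun h : C(Icc (-1:ℝ) 1, ℂ) => ∫ y, ‖h y‖^2 ∂muI := by
  rw [continuous_iff_continuousAt]
  intro h₀
  apply tendsto_integral_filter_of_dominated_convergence (fun _ => (‖h₀‖ + 1)^2)
  · filter_upwards with h
    exact (Continuous.norm h.continuous).pow 2 |>.aestronglyMeasurable
  · filter_upwards [Metric.ball_mem_nhds h₀ one_pos] with h hh
    filter_upwards with y
    rw [Real.norm_eq_abs, abs_of_nonneg (by positivity)]
    have h1 : ‖h y‖ ≤ ‖h₀‖ + 1 := by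
      calc ‖h y‖ ≤ ‖h₀ y‖ + dist (h y) (h₀ y) := by
            rw [dist_eq_norm]; exact norm_le_insert' _ _
        _ ≤ ‖h₀‖ + dist h h₀ := add_le_add (h₀.norm_coe_le_norm y)
            (ContinuousMap.dist_apply_le_dist y)
        _ ≤ ‖h₀‖ + 1 := by linarith [Metric.mem_ball.mp hh]
    exact pow_le_pow_left₀ (norm_nonneg _) h1 2
  · exact integrable_const _
  · filter_upwards with y
    exact ((continuous_eval_const y).norm.pow 2).continuousAt.tendsto

/-- the basic functional: square of the `L²` norm over `[-1, 1]` -/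
noncomputable def G (f : C(ℝ, ℂ)) : ℝ := ∫ x in (-1:ℝ)..1, ‖f x‖^2

theorem G_eq (f : C(ℝ, ℂ)) : G f = ∫ y, ‖f.restrict (Icc (-1:ℝ) 1) y‖^2 ∂muI := by
  rw [G, intervalIntegral.integral_of_le (by norm_num : (-1:ℝ) ≤ 1),
    ← integral_Icc_eq_integral_Ioc, muI,
    ← integral_subtype_comap measurableSet_Icc (fun x => ‖f x‖^2)]
  rfl

theorem contG : Continuous G := by
  have : G = (fun h : C(Icc (-1:ℝ) 1, ℂ) => ∫ y, ‖h y‖^2 ∂muI) ∘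
      (fun f : C(ℝ, ℂ) => f.restrict (Icc (-1:ℝ) 1)) := funext G_eq
  rw [this]
  exact contG0.comp (ContinuousMap.continuous_restrict _)

theorem G_pos (f : C(ℝ, ℂ)) (hf : f 0 ≠ 0) : 0 < G f := by
  rw [G, intervalIntegral.integral_of_le (by norm_num : (-1:ℝ) ≤ 1)]
  have hc : Continuous fun x : ℝ => ‖f x‖^2 := (f.continuous.norm).pow 2
  rw [setIntegral_pos_iff_support_of_nonneg_ae]
  · have h0 : (0:ℝ) < ‖f 0‖^2 := pow_pos (norm_pos_iff.mpr hf) 2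
    have hopen : {x : ℝ | 0 < ‖f x‖^2} ∈ nhds (0:ℝ) :=
      (isOpen_lt continuous_const hc).mem_nhds h0
    obtain ⟨δ, hδ, hball⟩ := Metric.eventually_nhds_iff_ball.mp hopen
    have hsub : Ioo (0:ℝ) (min δ 1) ⊆ Function.support (fun x => ‖f x‖^2) ∩ Ioc (-1:ℝ) 1 := by
      rintro x ⟨hx0, hx1⟩
      refine ⟨ne_of_gt (hball x ?_), by linarith, le_of_lt (lt_of_lt_of_le hx1 (min_le_right _ _))⟩
      rw [Metric.mem_ball, Real.dist_eq, sub_zero, abs_of_pos hx0]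
      exact lt_of_lt_of_le hx1 (min_le_left _ _)
    calc (0:ENNReal) < volume (Ioo (0:ℝ) (min δ 1)) := by
          rw [Real.volume_Ioo]
          simp only [ENNReal.ofReal_pos, sub_zero]
          exact lt_min hδ one_pos
      _ ≤ _ := measure_mono hsub
  · filter_upwards with x; positivity
  · exact hc.integrableOn_Ioc

theorem L2_tendsto (f : C(ℝ, ℂ)) (hf : MemLp (fun x => f x) 2 (volume : Measure ℝ)) :
    Tendsto (fun m : ℕ => ∫ x in ((m:ℝ)-1)..((m:ℝ)+1), ‖f x‖^2) atTop (𝓝 0) := by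
  have hint : Integrable (fun x : ℝ => ‖f x‖^2) volume := hf.norm.integrable_sq
  have key : ∀ c : ℝ, Tendsto (fun m : ℕ => ∫ x in Iic ((m:ℝ)+c), ‖f x‖^2) atTop
      (𝓝 (∫ x in univ, ‖f x‖^2)) := by
    intro c
    have hu : (⋃ m : ℕ, Iic ((m:ℝ)+c)) = univ := by
      ext x; simp only [mem_iUnion, mem_Iic, mem_univ, iff_true]
      obtain ⟨m, hm⟩ := exists_nat_ge (x - c); exact ⟨m, by linarith⟩
    have := tendsto_setIntegral_of_monotone (s := fun m : ℕ => Iic ((m:ℝ)+c))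
      (fun _ => measurableSet_Iic)
      (fun i j hij => Iic_subset_Iic.mpr (add_le_add_left (Nat.cast_le.mpr hij) c))
      (μ := volume) (f := fun x => ‖f x‖^2) (by rw [hu]; exact hint.integrableOn)
    rwa [hu] at this
  have h1 := (key 1).sub (key (-1))
  rw [sub_self] at h1
  refine h1.congr fun m => ?_
  rw [intervalIntegral.integral_Iic_sub_Iic hint.integrableOn hint.integrableOn]
  have : (m:ℝ) + -1 = (m:ℝ) - 1 := by ring
  rw [this]

theorem not_L2_of_translation_invariant_measure
    (ρ : Measure C(ℝ, ℂ)) [IsProbabilityMeasure ρ]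
    -- invariance under integer translations
    (hinv : ∀ n : ℤ,
      Measure.map (fun f : C(ℝ, ℂ) =>
        f.comp ⟨fun x => x - (n : ℝ), continuous_sub_right (n : ℝ)⟩) ρ = ρ)
    -- the law of f(0) is absolutely continuous w.r.t. Lebesgue measure on ℂ
    (hac : Measure.map (fun f : C(ℝ, ℂ) => f 0) ρ ≪ volume) :
    ρ {f : C(ℝ, ℂ) | MemLp (fun x => f x) 2 (volume : Measure ℝ)} = 0 := by
  set A := {f : C(ℝ, ℂ) | MemLp (fun x => f x) 2 (volume : Measure ℝ)} with hA
  have hstep : ∀ ε : ℝ, 0 < ε → ρ A ≤ ρ {f | G f ≤ ε} := by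
    intro ε hε
    have hGmeas : MeasurableSet {f : C(ℝ, ℂ) | G f ≤ ε} :=
      measurableSet_le contG.measurable measurable_const
    set S : ℕ → Set C(ℝ, ℂ) :=
      fun m => {f | ∫ x in ((m:ℝ)-1)..((m:ℝ)+1), ‖f x‖^2 ≤ ε} with hS
    have hSρ : ∀ m : ℕ, ρ (S m) = ρ {f | G f ≤ ε} := by
      intro m
      set T : C(ℝ, ℂ) → C(ℝ, ℂ) := fun f =>
        f.comp ⟨fun x => x - (((-(m:ℤ)):ℤ) : ℝ), continuous_sub_right _⟩ with hT
      have hTm : Measurable T := (ContinuousMap.continuous_precomp _).measurable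
      have hpre : T ⁻¹' {f | G f ≤ ε} = S m := by
        ext f
        simp only [mem_preimage, mem_setOf_eq, hS]
        have hGT : G (T f) = ∫ x in ((m:ℝ)-1)..((m:ℝ)+1), ‖f x‖^2 := by
          have e1 : G (T f) = ∫ x in (-1:ℝ)..1, ‖f (x - (((-(m:ℤ)):ℤ) : ℝ))‖^2 := rfl
          rw [e1, intervalIntegral.integral_comp_sub_right (fun x => ‖f x‖^2)]
          have e2 : (-1:ℝ) - (((-(m:ℤ)):ℤ) : ℝ) = (m:ℝ) - 1 := by push_cast; ring
          have e3 : (1:ℝ) - (((-(m:ℤ)):ℤ) : ℝ) = (m:ℝ) + 1 := by push_cast; ring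
          rw [e2, e3]
        rw [hGT]
      rw [← hpre, ← Measure.map_apply hTm hGmeas, hinv]
    have hsub : A ⊆ ⋃ N : ℕ, ⋂ m ∈ Ici N, S m := by
      intro f hf
      have hev : ∀ᶠ m in atTop, f ∈ S m := by
        filter_upwards [(L2_tendsto f hf).eventually_lt_const hε] with m hm
        exact le_of_lt hm
      obtain ⟨N, hN⟩ := eventually_atTop.mp hev
      exact mem_iUnion.mpr ⟨N, mem_iInter₂.mpr fun m hm => hN m hm⟩
    calc ρ A ≤ ρ (⋃ N : ℕ, ⋂ m ∈ Ici N, S m) := measure_mono hsub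
      _ ≤ ρ {f | G f ≤ ε} := by
          have hmono : Monotone fun N : ℕ => ⋂ m ∈ Ici N, S m := fun a b hab =>
            iInter₂_mono' fun m hm => ⟨m, le_trans hab hm, subset_rfl⟩
          refine le_of_tendsto (tendsto_measure_iUnion_atTop hmono) ?_
          filter_upwards with N
          calc ρ (⋂ m ∈ Ici N, S m) ≤ ρ (S N) :=
                measure_mono (biInter_subset_of_mem (mem_Ici.mpr le_rfl))
            _ = ρ {f | G f ≤ ε} := hSρ N
  have h2 : ∀ k : ℕ, ρ A ≤ ρ {f | G f ≤ 1/((k:ℝ)+1)} := fun k => hstep _ (by positivity)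
  have hiInter : Tendsto (fun k : ℕ => ρ {f | G f ≤ 1/((k:ℝ)+1)}) atTop
      (𝓝 (ρ (⋂ k : ℕ, {f | G f ≤ 1/((k:ℝ)+1)}))) := by
    apply tendsto_measure_iInter_atTop
    · exact fun k => (measurableSet_le contG.measurable measurable_const).nullMeasurableSet
    · intro a b hab
      apply setOf_subset_setOf.mpr
      intro f hf
      refine le_trans hf (one_div_le_one_div_of_le (by positivity) ?_)
      have : (a:ℝ) ≤ (b:ℝ) := Nat.cast_le.mpr hab
      linarith
    · exact ⟨0, measure_ne_top ρ _⟩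
  have h3 : ρ A ≤ ρ (⋂ k : ℕ, {f : C(ℝ, ℂ) | G f ≤ 1/((k:ℝ)+1)}) :=
    ge_of_tendsto hiInter (Eventually.of_forall h2)
  have hss : (⋂ k : ℕ, {f : C(ℝ, ℂ) | G f ≤ 1/((k:ℝ)+1)}) ⊆ {f | f 0 = 0} := by
    intro f hfm
    by_contra h0
    have hGf := G_pos f h0
    obtain ⟨k, hk⟩ := exists_nat_gt (1 / G f)
    have hk' : G f ≤ 1/((k:ℝ)+1) := mem_iInter.mp hfm k
    have hklt : 1/((k:ℝ)+1) < G f := by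
      rw [div_lt_iff₀ (by positivity)]
      rw [div_lt_iff₀ hGf] at hk
      nlinarith
    linarith
  have h0 : ρ {f : C(ℝ, ℂ) | f 0 = 0} = 0 := by
    have hev : Measurable fun f : C(ℝ, ℂ) => f 0 := (continuous_eval_const (0:ℝ)).measurable
    have heq : ρ {f : C(ℝ, ℂ) | f 0 = 0}
        = Measure.map (fun f : C(ℝ, ℂ) => f 0) ρ {0} := by
      rw [Measure.map_apply hev (measurableSet_singleton 0)]; rfl
    rw [heq]
    exact hac (by simp)
  exact le_antisymm (h0 ▸ le_trans h3 (measure_mono hss)) zero_le
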